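/- Let $f$ be a nonnegative real-valued function on the positive integers, let $x \ge 1$ be real, and let $D$ be a real parameter with $1 \le D \le x$. Then $\sum_{D < n \le x} f\left(\left\lfloor \frac{x}{n} \right\rfloor\right) = \sum_{d \le x/D} f(d) \sum_{x/(d+1) < n \le x/d} 1 + O\left(f\left(\left\lfloor \frac{x}{D}\right\rfloor\right)\left(1 + \frac{D^2}{x}\right)\right)$, where the inner sums count positive integers $n$ in the indicated ranges. -/

import Mathlib

open scoped Classical

theorem stmt4_aux (f : ℕ → ℝ) (hf : ∀ n, 0 ≤ f n) (x : ℝ) (hx : 1 ≤ x)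
    (D : ℝ) (hD : 1 ≤ D) (hDx : D ≤ x) :
    |(∑ n ∈ (Finset.Ioc 0 ⌊x⌋₊).filter (fun n : ℕ => D < (n : ℝ)), f ⌊x / (n : ℝ)⌋₊)
      - ∑ d ∈ Finset.Icc 1 ⌊x / D⌋₊, f d *
          (((Finset.Ioc 0 ⌈x⌉₊).filter
            (fun n : ℕ => x / ((d : ℝ) + 1) < (n : ℝ) ∧ (n : ℝ) ≤ x / (d : ℝ))).card : ℝ)|
      ≤ 2 * f ⌊x / D⌋₊ * (1 + D ^ 2 / x) := by
  have hx0 : (0:ℝ) < x := by linarith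
  have hD0 : (0:ℝ) < D := by linarith
  set d₀ := ⌊x / D⌋₊ with hd₀def
  have hxD1 : (1:ℝ) ≤ x / D := (one_le_div hD0).mpr hDx
  have hd₀1 : 1 ≤ d₀ := Nat.le_floor (by exact_mod_cast hxD1)
  have ht1 : (1:ℝ) ≤ (d₀:ℝ) := by exact_mod_cast hd₀1
  have ht0 : (0:ℝ) < (d₀:ℝ) := by linarith
  have h1 : (d₀:ℝ) * D ≤ x := by
    have h := Nat.floor_le (show (0:ℝ) ≤ x / D by positivity)
    rw [le_div_iff₀ hD0] at h
    exact h
  have h2 : x < ((d₀:ℝ) + 1) * D := by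
    have h := Nat.lt_floor_add_one (x / D)
    rw [div_lt_iff₀ hD0] at h
    exact_mod_cast h
  -- fiber characterization
  have hfiber : ∀ d : ℕ, 1 ≤ d → ∀ n : ℕ, 0 < n →
      (⌊x / (n:ℝ)⌋₊ = d ↔ x / ((d:ℝ) + 1) < (n:ℝ) ∧ (n:ℝ) ≤ x / (d:ℝ)) := by
    intro d hd n hn
    have hn0 : (0:ℝ) < (n:ℝ) := by exact_mod_cast hn
    have hd0 : (0:ℝ) < (d:ℝ) := by exact_mod_cast hd
    rw [Nat.floor_eq_iff (by positivity)]
    have e1 : ((d:ℝ) ≤ x / n ↔ (n:ℝ) ≤ x / d) := by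
      rw [le_div_iff₀ hn0, le_div_iff₀ hd0, mul_comm]
    have e2 : (x / n < (d:ℝ) + 1 ↔ x / ((d:ℝ) + 1) < n) := by
      rw [div_lt_iff₀ hn0, div_lt_iff₀ (by linarith : (0:ℝ) < (d:ℝ) + 1), mul_comm]
    rw [e1, e2]
    tauto
  set T := (Finset.Ioc 0 ⌊x⌋₊).filter (fun n : ℕ => D < (n : ℝ)) with hT
  have hmaps : ∀ n ∈ T, ⌊x / (n:ℝ)⌋₊ ∈ Finset.Icc 1 d₀ := by
    intro n hn
    simp only [hT, Finset.mem_filter, Finset.mem_Ioc] at hn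
    obtain ⟨⟨hn0, hnfl⟩, hDn⟩ := hn
    have hn0' : (0:ℝ) < (n:ℝ) := by exact_mod_cast hn0
    have hnx : (n:ℝ) ≤ x := by
      have := (Nat.le_floor_iff hx0.le).mp hnfl
      exact_mod_cast this
    refine Finset.mem_Icc.mpr ⟨Nat.le_floor ?_, Nat.floor_le_floor ?_⟩
    · rw [Nat.cast_one, le_div_iff₀ hn0', one_mul]; exact hnx
    · exact div_le_div_of_nonneg_left hx0.le hD0 hDn.le
  -- rewrite S₁ fiberwise
  have hS1 : (∑ n ∈ T, f ⌊x / (n:ℝ)⌋₊)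
      = ∑ d ∈ Finset.Icc 1 d₀, f d *
          ((T.filter (fun n : ℕ => ⌊x / (n:ℝ)⌋₊ = d)).card : ℝ) := by
    rw [← Finset.sum_fiberwise_of_maps_to' hmaps f]
    exact Finset.sum_congr rfl fun d _ => by
      rw [Finset.sum_const, nsmul_eq_mul, mul_comm]
  -- set equalities
  have hFB : ∀ d : ℕ, 1 ≤ d →
      T.filter (fun n : ℕ => ⌊x / (n:ℝ)⌋₊ = d)
      = ((Finset.Ioc 0 ⌈x⌉₊).filter
          (fun n : ℕ => x / ((d:ℝ) + 1) < (n:ℝ) ∧ (n:ℝ) ≤ x / (d:ℝ))).filter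
            (fun n : ℕ => D < (n:ℝ)) := by
    intro d hd1
    ext n
    simp only [hT, Finset.mem_filter, Finset.mem_Ioc, Finset.filter_filter]
    constructor
    · rintro ⟨⟨hn0, hnfl⟩, hDn, hfl⟩
      have hint := (hfiber d hd1 n hn0).mp hfl
      exact ⟨⟨hn0, le_trans hnfl (Nat.floor_le_ceil x)⟩, hint, hDn⟩
    · rintro ⟨⟨hn0, _⟩, ⟨hlt, hle⟩, hDn⟩
      have hnx : (n:ℝ) ≤ x :=
        le_trans hle (div_le_self hx0.le (by exact_mod_cast hd1))
      exact ⟨⟨hn0, Nat.le_floor hnx⟩, hDn, (hfiber d hd1 n hn0).mpr ⟨hlt, hle⟩⟩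
  have hBall : ∀ d : ℕ, 1 ≤ d → d < d₀ → ∀ n ∈ (Finset.Ioc 0 ⌈x⌉₊).filter
      (fun n : ℕ => x / ((d:ℝ) + 1) < (n:ℝ) ∧ (n:ℝ) ≤ x / (d:ℝ)), D < (n:ℝ) := by
    intro d _ hdlt n hn
    simp only [Finset.mem_filter, Finset.mem_Ioc] at hn
    obtain ⟨⟨hn0, _⟩, hlt, _⟩ := hn
    have hDd : D ≤ x / (d₀:ℝ) := by
      rw [le_div_iff₀ ht0, mul_comm]; exact h1
    have hdd : x / (d₀:ℝ) ≤ x / ((d:ℝ) + 1) := by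
      apply div_le_div_of_nonneg_left hx0.le (by positivity)
      exact_mod_cast hdlt
    linarith
  rw [hS1, ← Finset.sum_sub_distrib]
  have hzero : ∀ d ∈ Finset.Icc 1 d₀, d ≠ d₀ →
      f d * ((T.filter (fun n : ℕ => ⌊x / (n:ℝ)⌋₊ = d)).card : ℝ)
        - f d * (((Finset.Ioc 0 ⌈x⌉₊).filter
            (fun n : ℕ => x / ((d:ℝ) + 1) < (n:ℝ) ∧ (n:ℝ) ≤ x / (d:ℝ))).card : ℝ) = 0 := by
    intro d hd hne
    obtain ⟨hd1, hdle⟩ := Finset.mem_Icc.mp hd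
    rw [hFB d hd1, Finset.filter_true_of_mem (hBall d hd1 (lt_of_le_of_ne hdle hne))]
    ring
  rw [Finset.sum_eq_single_of_mem d₀ (Finset.mem_Icc.mpr ⟨hd₀1, le_refl _⟩) hzero]
  -- now bound the d₀ term
  set B := (Finset.Ioc 0 ⌈x⌉₊).filter
      (fun n : ℕ => x / ((d₀:ℝ) + 1) < (n:ℝ) ∧ (n:ℝ) ≤ x / (d₀:ℝ)) with hBdef
  set E := B.filter (fun n : ℕ => ¬ D < (n:ℝ)) with hEdef
  have hsplit : (T.filter (fun n : ℕ => ⌊x / (n:ℝ)⌋₊ = d₀)).card + E.card = B.card := by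
    rw [hFB d₀ hd₀1]
    exact Finset.card_filter_add_card_filter_not _
  have hEsub : E ⊆ Finset.Ioc ⌊x/((d₀:ℝ)+1)⌋₊ ⌊D⌋₊ := by
    intro n hn
    simp only [hEdef, hBdef, Finset.mem_filter, Finset.mem_Ioc, not_lt] at hn
    obtain ⟨⟨⟨hn0, _⟩, hlt, _⟩, hnD⟩ := hn
    refine Finset.mem_Ioc.mpr ⟨?_, Nat.le_floor hnD⟩
    rw [Nat.floor_lt (by positivity)]
    exact hlt
  have hfl : x/((d₀:ℝ)+1) < D := by
    rw [div_lt_iff₀ (by positivity), mul_comm]; exact h2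
  have hEcard : (E.card : ℝ) ≤ D - x/((d₀:ℝ)+1) + 1 := by
    have hc := Finset.card_le_card hEsub
    rw [Nat.card_Ioc] at hc
    rcases le_or_gt ⌊D⌋₊ ⌊x/((d₀:ℝ)+1)⌋₊ with hcase | hcase
    · have hz : E.card = 0 := by omega
      rw [hz]; push_cast; linarith
    · have hc' : (E.card : ℝ) ≤ ((⌊D⌋₊ - ⌊x/((d₀:ℝ)+1)⌋₊ : ℕ) : ℝ) := by
        exact_mod_cast hc
      rw [Nat.cast_sub hcase.le] at hc'
      have hDfl : (⌊D⌋₊:ℝ) ≤ D := Nat.floor_le hD0.le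
      have hafl : x/((d₀:ℝ)+1) < (⌊x/((d₀:ℝ)+1)⌋₊ : ℝ) + 1 := Nat.lt_floor_add_one _
      linarith
  have hbound : D - x/((d₀:ℝ)+1) ≤ D^2/x := by
    have e : D - x/((d₀:ℝ)+1) = (D*((d₀:ℝ)+1) - x)/((d₀:ℝ)+1) := by
      field_simp
    rw [e, div_le_div_iff₀ (by positivity) hx0]
    have h1' : D * (d₀:ℝ) ≤ x := by linarith [h1, mul_comm (d₀:ℝ) D]
    nlinarith [sq_nonneg (x - D*(d₀:ℝ)),
      mul_nonneg (sub_nonneg.mpr h1') (mul_nonneg hD0.le (sub_nonneg.mpr ht1))]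
  have hEfinal : (E.card : ℝ) ≤ 2 * (1 + D^2/x) := by
    have : (0:ℝ) ≤ D^2/x := by positivity
    linarith
  have hcardeq : ((T.filter (fun n : ℕ => ⌊x / (n:ℝ)⌋₊ = d₀)).card : ℝ) - (B.card : ℝ)
      = -(E.card : ℝ) := by
    have h := hsplit
    push_cast [← h]
    ring
  calc |f d₀ * ((T.filter (fun n : ℕ => ⌊x / (n:ℝ)⌋₊ = d₀)).card : ℝ)
        - f d₀ * (B.card : ℝ)|
      = f d₀ * (E.card : ℝ) := by
        rw [← mul_sub, hcardeq, abs_mul, abs_neg, Nat.abs_cast, abs_of_nonneg (hf d₀)]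
    _ ≤ f d₀ * (2 * (1 + D^2/x)) := mul_le_mul_of_nonneg_left hEfinal (hf d₀)
    _ = 2 * f d₀ * (1 + D^2/x) := by ring

theorem stmt4 :
    ∃ C > (0:ℝ), ∀ f : ℕ → ℝ, (∀ n, 0 ≤ f n) → ∀ x : ℝ, 1 ≤ x →
      ∀ D : ℝ, 1 ≤ D → D ≤ x →
      |(∑ n ∈ (Finset.Ioc 0 ⌊x⌋₊).filter (fun n : ℕ => D < (n : ℝ)), f ⌊x / (n : ℝ)⌋₊)
        - ∑ d ∈ Finset.Icc 1 ⌊x / D⌋₊, f d *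
            (((Finset.Ioc 0 ⌈x⌉₊).filter
              (fun n : ℕ => x / (d + 1) < (n : ℝ) ∧ (n : ℝ) ≤ x / d)).card : ℝ)|
        ≤ C * f ⌊x / D⌋₊ * (1 + D ^ 2 / x) := by
  refine ⟨2, two_pos, ?_⟩
  intro f hf x hx D hD hDx
  exact stmt4_aux f hf x hx D hD hDx
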